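/- Define Γ = Σ_{σ,σ' ∈ S₅} sgn(σ)·sgn(σ') · (e_{σ(1)} ∧ e_{σ(2)}) ⊗ (e_{σ(3)} ∧ e_{σ(4)}) ⊗ (e_{σ'(1)} ∧ e_{σ'(2)}) ⊗ (e_{σ'(3)} ∧ e_{σ'(4)}) ⊗ (e_{σ(5)} ∧ e_{σ'(5)}), an element of the 5-fold tensor power (⋀²V)^{⊗5}. Then Γ is SL(V)-invariant: for every g ∈ SL(5,ℂ), acting on (⋀²V)^{⊗5} via the 5-fold tensor power of the induced map ⋀²g : ⋀²V → ⋀²V, one has ((⋀²g)^{⊗5})(Γ) = Γ. -/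

import Mathlib

open ExteriorAlgebra

/-- `V = ℂ⁵`, with standard basis `e₁, …, e₅`. -/
abbrev V : Type := Fin 5 → ℂ

/-- The exterior algebra of `V`, in which degree-2 elements are the 2-vectors of `⋀²V`. -/
abbrev E : Type := ExteriorAlgebra ℂ V

/-- The standard basis vector `eᵢ` of `V = ℂ⁵`. -/
noncomputable def e (i : Fin 5) : V := Pi.single i 1

/-- The 2-vector `eᵢ ∧ eⱼ`. -/
noncomputable def w (i j : Fin 5) : E := ι ℂ (e i) * ι ℂ (e j)

/-- The 5-fold tensor power `(⋀²V)^{⊗5}` (realised inside the 5-fold tensor power of the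
exterior algebra). -/
abbrev T : Type := PiTensorProduct ℂ (fun _ : Fin 5 => E)

/-- The element
`Γ = Σ_{σ,σ'∈S₅} sgn(σ)sgn(σ') (e_{σ(1)}∧e_{σ(2)}) ⊗ (e_{σ(3)}∧e_{σ(4)}) ⊗
(e_{σ'(1)}∧e_{σ'(2)}) ⊗ (e_{σ'(3)}∧e_{σ'(4)}) ⊗ (e_{σ(5)}∧e_{σ'(5)})` of `(⋀²V)^{⊗5}`. -/
noncomputable def Γ : T :=
  ∑ σ : Equiv.Perm (Fin 5), ∑ σ' : Equiv.Perm (Fin 5),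
    (((Equiv.Perm.sign σ : ℤ) : ℂ) * ((Equiv.Perm.sign σ' : ℤ) : ℂ)) •
      PiTensorProduct.tprod ℂ
        ![w (σ 0) (σ 1), w (σ 2) (σ 3), w (σ' 0) (σ' 1), w (σ' 2) (σ' 3), w (σ 4) (σ' 4)]


noncomputable def ww : V →ₗ[ℂ] V →ₗ[ℂ] E :=
  (LinearMap.mul ℂ E).compl₁₂ (ι ℂ) (ι ℂ)

lemma ww_apply (a b : V) : ww a b = ι ℂ a * ι ℂ b := rfl

section upd
variable {α : Type*} (m : Fin 5 → α) (z : α)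

lemma upd0 : Function.update m 0 z = ![z, m 1, m 2, m 3, m 4] := by
  funext j; fin_cases j <;> simp
lemma upd1 : Function.update m 1 z = ![m 0, z, m 2, m 3, m 4] := by
  funext j; fin_cases j <;> simp
lemma upd2 : Function.update m 2 z = ![m 0, m 1, z, m 3, m 4] := by
  funext j; fin_cases j <;> simp
lemma upd3 : Function.update m 3 z = ![m 0, m 1, m 2, z, m 4] := by
  funext j; fin_cases j <;> simp
lemma upd4 : Function.update m 4 z = ![m 0, m 1, m 2, m 3, z] := by
  funext j; fin_cases j <;> simp
end upd

section tp
variable (x y a b c d : E)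

lemma tpa0 : PiTensorProduct.tprod ℂ ![x + y, a, b, c, d]
    = PiTensorProduct.tprod ℂ ![x, a, b, c, d] + PiTensorProduct.tprod ℂ ![y, a, b, c, d] := by
  simpa [upd0] using MultilinearMap.map_update_add
    (PiTensorProduct.tprod ℂ (s := fun _ : Fin 5 => E)) ![x, a, b, c, d] 0 x y
lemma tpa1 : PiTensorProduct.tprod ℂ ![a, x + y, b, c, d]
    = PiTensorProduct.tprod ℂ ![a, x, b, c, d] + PiTensorProduct.tprod ℂ ![a, y, b, c, d] := by
  simpa [upd1] using MultilinearMap.map_update_add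
    (PiTensorProduct.tprod ℂ (s := fun _ : Fin 5 => E)) ![a, x, b, c, d] 1 x y
lemma tpa2 : PiTensorProduct.tprod ℂ ![a, b, x + y, c, d]
    = PiTensorProduct.tprod ℂ ![a, b, x, c, d] + PiTensorProduct.tprod ℂ ![a, b, y, c, d] := by
  simpa [upd2] using MultilinearMap.map_update_add
    (PiTensorProduct.tprod ℂ (s := fun _ : Fin 5 => E)) ![a, b, x, c, d] 2 x y
lemma tpa3 : PiTensorProduct.tprod ℂ ![a, b, c, x + y, d]
    = PiTensorProduct.tprod ℂ ![a, b, c, x, d] + PiTensorProduct.tprod ℂ ![a, b, c, y, d] := by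
  simpa [upd3] using MultilinearMap.map_update_add
    (PiTensorProduct.tprod ℂ (s := fun _ : Fin 5 => E)) ![a, b, c, x, d] 3 x y
lemma tpa4 : PiTensorProduct.tprod ℂ ![a, b, c, d, x + y]
    = PiTensorProduct.tprod ℂ ![a, b, c, d, x] + PiTensorProduct.tprod ℂ ![a, b, c, d, y] := by
  simpa [upd4] using MultilinearMap.map_update_add
    (PiTensorProduct.tprod ℂ (s := fun _ : Fin 5 => E)) ![a, b, c, d, x] 4 x y

variable (r : ℂ)

lemma tps0 : PiTensorProduct.tprod ℂ ![r • x, a, b, c, d]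
    = r • PiTensorProduct.tprod ℂ ![x, a, b, c, d] := by
  simpa [upd0] using MultilinearMap.map_update_smul
    (PiTensorProduct.tprod ℂ (s := fun _ : Fin 5 => E)) ![x, a, b, c, d] 0 r x
lemma tps1 : PiTensorProduct.tprod ℂ ![a, r • x, b, c, d]
    = r • PiTensorProduct.tprod ℂ ![a, x, b, c, d] := by
  simpa [upd1] using MultilinearMap.map_update_smul
    (PiTensorProduct.tprod ℂ (s := fun _ : Fin 5 => E)) ![a, x, b, c, d] 1 r x
lemma tps2 : PiTensorProduct.tprod ℂ ![a, b, r • x, c, d]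
    = r • PiTensorProduct.tprod ℂ ![a, b, x, c, d] := by
  simpa [upd2] using MultilinearMap.map_update_smul
    (PiTensorProduct.tprod ℂ (s := fun _ : Fin 5 => E)) ![a, b, x, c, d] 2 r x
lemma tps3 : PiTensorProduct.tprod ℂ ![a, b, c, r • x, d]
    = r • PiTensorProduct.tprod ℂ ![a, b, c, x, d] := by
  simpa [upd3] using MultilinearMap.map_update_smul
    (PiTensorProduct.tprod ℂ (s := fun _ : Fin 5 => E)) ![a, b, c, x, d] 3 r x
lemma tps4 : PiTensorProduct.tprod ℂ ![a, b, c, d, r • x]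
    = r • PiTensorProduct.tprod ℂ ![a, b, c, d, x] := by
  simpa [upd4] using MultilinearMap.map_update_smul
    (PiTensorProduct.tprod ℂ (s := fun _ : Fin 5 => E)) ![a, b, c, d, x] 4 r x
end tp

/-- multilinear in `v`, with fixed slots `c0 c1` and fixed last vector `u`. -/
noncomputable def M1 (c0 c1 : E) (u : V) : MultilinearMap ℂ (fun _ : Fin 5 => V) T where
  toFun v := PiTensorProduct.tprod ℂ ![ww (v 0) (v 1), ww (v 2) (v 3), c0, c1, ww (v 4) u]
  map_update_add' := by
    intro dec m i x y
    have hdec : dec = instDecidableEqFin 5 := Subsingleton.elim _ _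
    subst hdec
    fin_cases i <;>
      simp [Function.update_apply, map_add, LinearMap.add_apply, tpa0, tpa1, tpa4]
  map_update_smul' := by
    intro dec m i r x
    have hdec : dec = instDecidableEqFin 5 := Subsingleton.elim _ _
    subst hdec
    fin_cases i <;>
      simp [Function.update_apply, map_smul, LinearMap.smul_apply, tps0, tps1, tps4]

/-- multilinear in `v'`, with fixed slots `c0 c1` and fixed vector `u` in the last slot. -/
noncomputable def M2 (c0 c1 : E) (u : V) : MultilinearMap ℂ (fun _ : Fin 5 => V) T where
  toFun v := PiTensorProduct.tprod ℂ ![c0, c1, ww (v 0) (v 1), ww (v 2) (v 3), ww u (v 4)]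
  map_update_add' := by
    intro dec m i x y
    have hdec : dec = instDecidableEqFin 5 := Subsingleton.elim _ _
    subst hdec
    fin_cases i <;>
      simp [Function.update_apply, map_add, LinearMap.add_apply, tpa2, tpa3, tpa4]
  map_update_smul' := by
    intro dec m i r x
    have hdec : dec = instDecidableEqFin 5 := Subsingleton.elim _ _
    subst hdec
    fin_cases i <;>
      simp [Function.update_apply, map_smul, LinearMap.smul_apply, tps2, tps3, tps4]

noncomputable def A1 (c0 c1 : E) (u : V) : V [⋀^Fin 5]→ₗ[ℂ] T :=
  MultilinearMap.alternatization (M1 c0 c1 u)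

noncomputable def A2 (c0 c1 : E) (u : V) : V [⋀^Fin 5]→ₗ[ℂ] T :=
  MultilinearMap.alternatization (M2 c0 c1 u)

lemma A1_apply (c0 c1 : E) (u : V) (v : Fin 5 → V) :
    A1 c0 c1 u v = ∑ σ : Equiv.Perm (Fin 5), ((Equiv.Perm.sign σ : ℤ) : ℂ) •
      PiTensorProduct.tprod ℂ
        ![ww (v (σ 0)) (v (σ 1)), ww (v (σ 2)) (v (σ 3)), c0, c1, ww (v (σ 4)) u] := by
  rw [A1, MultilinearMap.alternatization_apply]
  refine Finset.sum_congr rfl fun σ _ => ?_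
  rw [Units.smul_def, Int.cast_smul_eq_zsmul]
  rfl

lemma A2_apply (c0 c1 : E) (u : V) (v : Fin 5 → V) :
    A2 c0 c1 u v = ∑ σ : Equiv.Perm (Fin 5), ((Equiv.Perm.sign σ : ℤ) : ℂ) •
      PiTensorProduct.tprod ℂ
        ![c0, c1, ww (v (σ 0)) (v (σ 1)), ww (v (σ 2)) (v (σ 3)), ww u (v (σ 4))] := by
  rw [A2, MultilinearMap.alternatization_apply]
  refine Finset.sum_congr rfl fun σ _ => ?_
  rw [Units.smul_def, Int.cast_smul_eq_zsmul]
  rfl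

set_option maxRecDepth 8000 in
lemma alt_det {N : Type*} [AddCommGroup N] [Module ℂ N] (f : V [⋀^Fin 5]→ₗ[ℂ] N)
    (g : V →ₗ[ℂ] V) : f (fun i => g (e i)) = LinearMap.det g • f e := by
  have hb : ⇑(Pi.basisFun ℂ (Fin 5)) = e := by
    funext i; simp [e]
  have hv : (fun i => g (e i)) = g ∘ ⇑(Pi.basisFun ℂ (Fin 5)) := by
    rw [hb]; rfl
  rw [← sub_eq_zero, ← Module.forall_dual_apply_eq_zero_iff ℂ]
  intro φ
  have h := DFunLike.congr_fun
    ((φ.compAlternatingMap f).eq_smul_basis_det (Pi.basisFun ℂ (Fin 5))) (fun i => g (e i))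
  rw [AlternatingMap.smul_apply, hv, Module.Basis.det_comp, Module.Basis.det_self, mul_one,
    LinearMap.compAlternatingMap_apply, LinearMap.compAlternatingMap_apply, hb] at h
  have h2 : φ (f fun i => g (e i)) = φ (f e) • LinearMap.det g := h
  rw [map_sub, map_smul, h2, smul_eq_mul, smul_eq_mul, mul_comm, sub_self]

noncomputable def Sfun (v u : Fin 5 → V) : T :=
  ∑ σ : Equiv.Perm (Fin 5), ∑ σ' : Equiv.Perm (Fin 5),
    (((Equiv.Perm.sign σ : ℤ) : ℂ) * ((Equiv.Perm.sign σ' : ℤ) : ℂ)) •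
      PiTensorProduct.tprod ℂ
        ![ww (v (σ 0)) (v (σ 1)), ww (v (σ 2)) (v (σ 3)), ww (u (σ' 0)) (u (σ' 1)),
          ww (u (σ' 2)) (u (σ' 3)), ww (v (σ 4)) (u (σ' 4))]

lemma Gamma_eq_Sfun : Γ = Sfun e e := rfl

lemma step1 (v u : Fin 5 → V) :
    Sfun v u = ∑ σ' : Equiv.Perm (Fin 5), ((Equiv.Perm.sign σ' : ℤ) : ℂ) •
      A1 (ww (u (σ' 0)) (u (σ' 1))) (ww (u (σ' 2)) (u (σ' 3))) (u (σ' 4)) v := by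
  rw [Sfun, Finset.sum_comm]
  refine Finset.sum_congr rfl fun σ' _ => ?_
  rw [A1_apply, Finset.smul_sum]
  refine Finset.sum_congr rfl fun σ _ => ?_
  rw [smul_smul, mul_comm]

lemma step2 (v u : Fin 5 → V) :
    Sfun v u = ∑ σ : Equiv.Perm (Fin 5), ((Equiv.Perm.sign σ : ℤ) : ℂ) •
      A2 (ww (v (σ 0)) (v (σ 1))) (ww (v (σ 2)) (v (σ 3))) (v (σ 4)) u := by
  rw [Sfun]
  refine Finset.sum_congr rfl fun σ _ => ?_
  rw [A2_apply, Finset.smul_sum]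
  refine Finset.sum_congr rfl fun σ' _ => ?_
  rw [smul_smul]


/-- `Γ` is `SL(V)`-invariant: for every `g ∈ SL(5, ℂ)` (a linear
automorphism of `V = ℂ⁵` of determinant 1), acting on `(⋀²V)^{⊗5}` via the 5-fold tensor
power of the induced map `⋀²g` (given by `a ∧ b ↦ g(a) ∧ g(b)`), one has `g · Γ = Γ`. -/
theorem Gamma_SL5_invariant (g : V →ₗ[ℂ] V) (hg : LinearMap.det g = 1) :
    PiTensorProduct.map (fun _ : Fin 5 => (ExteriorAlgebra.map g).toLinearMap) Γ = Γ := by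
  set ge : Fin 5 → V := fun i => g (e i) with hge
  have hmap : PiTensorProduct.map (fun _ : Fin 5 => (ExteriorAlgebra.map g).toLinearMap) Γ
      = Sfun ge ge := by
    rw [Γ, Sfun, map_sum]
    refine Finset.sum_congr rfl fun σ _ => ?_
    rw [map_sum]
    refine Finset.sum_congr rfl fun σ' _ => ?_
    rw [LinearMap.map_smul, PiTensorProduct.map_tprod]
    congr 1
    refine congrArg (⇑(PiTensorProduct.tprod ℂ (s := fun _ : Fin 5 => E)))
      (funext fun j => ?_)
    fin_cases j <;>
      simp [w, ww_apply, map_apply_ι, hge]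
  have key1 : ∀ (c0 c1 : E) (u : V), A1 c0 c1 u ge = A1 c0 c1 u e := by
    intro c0 c1 u; rw [hge, alt_det, hg, one_smul]
  have key2 : ∀ (c0 c1 : E) (u : V), A2 c0 c1 u ge = A2 c0 c1 u e := by
    intro c0 c1 u; rw [hge, alt_det, hg, one_smul]
  rw [hmap, step1]
  simp only [key1]
  rw [← step1 e ge, step2 e ge]
  simp only [key2]
  rw [← step2 e e, ← Gamma_eq_Sfun]
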